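/- (Gabidulin codes are MRD) Let q be a prime power, 1 ≤ k ≤ n ≤ m integers, and let g₁,…,g_n ∈ F_{q^m} be linearly independent over F_q. Let C ⊆ F_{q^m}^n be the F_{q^m}-row space of the k×n matrix G whose (i,j) entry is g_j^{q^{i−1}} for 1 ≤ i ≤ k, 1 ≤ j ≤ n. Then C has F_{q^m}-dimension k and its minimum rank distance equals n − k + 1, i.e. C attains the Singleton-like bound. -/

import Mathlib

open Module Polynomial

section Aux

variable (Fq : Type*) {L : Type*} [Field Fq] [Fintype Fq] [Field L] [Algebra Fq L]

lemma frob_add (x y : L) (e : ℕ) :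
    (x + y) ^ (Fintype.card Fq) ^ e =
      x ^ (Fintype.card Fq) ^ e + y ^ (Fintype.card Fq) ^ e := by
  obtain ⟨p, hp⟩ := CharP.exists Fq
  obtain ⟨s, hps, hcard⟩ := FiniteField.card Fq p
  haveI : Fact p.Prime := ⟨hps⟩
  haveI : CharP L p := charP_of_injective_algebraMap (algebraMap Fq L).injective p
  rw [hcard, ← pow_mul, add_pow_char_pow]

lemma frob_smul (c : Fq) (x : L) (e : ℕ) :
    (c • x) ^ (Fintype.card Fq) ^ e = c • x ^ (Fintype.card Fq) ^ e := by
  rw [Algebra.smul_def, Algebra.smul_def, mul_pow, ← map_pow, FiniteField.pow_card_pow]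

/-- The `Fq`-linearized polynomial map `x ↦ ∑ i, a i * x ^ q ^ i`. -/
noncomputable def qpoly {k : ℕ} (a : Fin k → L) : L →ₗ[Fq] L where
  toFun x := ∑ i : Fin k, a i * x ^ (Fintype.card Fq) ^ (i : ℕ)
  map_add' x y := by
    simp only [frob_add Fq, mul_add, Finset.sum_add_distrib]
  map_smul' c x := by
    simp only [frob_smul Fq, mul_smul_comm, RingHom.id_apply, Finset.smul_sum]

lemma qpoly_apply {k : ℕ} (a : Fin k → L) (x : L) :
    qpoly Fq a x = ∑ i : Fin k, a i * x ^ (Fintype.card Fq) ^ (i : ℕ) := rfl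

/-- A nonzero linearized polynomial of `q`-degree `< k` has kernel of dimension `≤ k - 1`. -/
lemma qpoly_ker_finrank_le [FiniteDimensional Fq L] {k : ℕ} (hk : 1 ≤ k)
    {a : Fin k → L} (ha : a ≠ 0) :
    finrank Fq (LinearMap.ker (qpoly Fq a)) ≤ k - 1 := by
  classical
  have hq2 : 1 < Fintype.card Fq := Fintype.one_lt_card
  set q := Fintype.card Fq with hqdef
  set P : L[X] := ∑ i : Fin k, C (a i) * X ^ q ^ (i : ℕ) with hP
  have hcoeff : ∀ j : Fin k, P.coeff (q ^ (j : ℕ)) = a j := by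
    intro j
    rw [hP, Polynomial.finset_sum_coeff]
    rw [Finset.sum_eq_single j]
    · simp [coeff_C_mul, coeff_X_pow]
    · intro i _ hij
      simp only [coeff_C_mul, coeff_X_pow]
      rw [if_neg, mul_zero]
      intro h
      exact hij (Fin.ext (Nat.pow_right_injective hq2 h.symm))
    · intro h
      exact absurd (Finset.mem_univ j) h
  have hP0 : P ≠ 0 := by
    have : ∃ j, a j ≠ 0 := by
      by_contra h
      push_neg at h
      exact ha (funext h)
    obtain ⟨j, hj⟩ := this
    intro h
    exact hj (by rw [← hcoeff j, h, coeff_zero])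
  have hdeg : P.natDegree ≤ q ^ (k - 1) := by
    rw [hP]
    apply Polynomial.natDegree_sum_le_of_forall_le
    intro i _
    refine (natDegree_C_mul_le _ _).trans ?_
    rw [natDegree_X_pow]
    have := i.isLt
    exact Nat.pow_le_pow_right (by omega) (by omega)
  have hroot : ∀ x ∈ LinearMap.ker (qpoly Fq a), P.IsRoot x := by
    intro x hx
    have hx0 : qpoly Fq a x = 0 := LinearMap.mem_ker.mp hx
    have : P.eval x = qpoly Fq a x := by
      rw [hP, qpoly_apply, Polynomial.eval_finset_sum]
      simp
      rfl
    rw [IsRoot, this, hx0]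
  haveI : Finite L := Module.finite_of_finite Fq
  haveI : Fintype L := Fintype.ofFinite L
  have hsub : ∀ x : LinearMap.ker (qpoly Fq a), (x : L) ∈ P.roots.toFinset := by
    intro x
    rw [Multiset.mem_toFinset, mem_roots hP0]
    exact hroot x x.2
  have hcard1 : Fintype.card (LinearMap.ker (qpoly Fq a)) ≤ P.roots.toFinset.card := by
    have hinj : Function.Injective (fun x : LinearMap.ker (qpoly Fq a) =>
        (⟨(x : L), hsub x⟩ : {y // y ∈ P.roots.toFinset})) := by
      intro x y hxy
      simp only at hxy
      exact Subtype.ext (Subtype.mk_eq_mk.mp hxy)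
    have h := Fintype.card_le_of_injective _ hinj
    rwa [Fintype.card_coe] at h
  have hcard2 : P.roots.toFinset.card ≤ q ^ (k - 1) :=
    le_trans (Multiset.toFinset_card_le _) (le_trans (Polynomial.card_roots' P) hdeg)
  have hcard3 : Fintype.card (LinearMap.ker (qpoly Fq a)) = q ^ finrank Fq (LinearMap.ker (qpoly Fq a)) :=
    card_eq_pow_finrank
  rw [hcard3] at hcard1
  exact (Nat.pow_le_pow_iff_right hq2).mp (le_trans hcard1 hcard2)

/-- Rank-nullity for the restriction of `f` to a submodule `V`. -/
lemma finrank_map_add_comap [FiniteDimensional Fq L] (f : L →ₗ[Fq] L) (V : Submodule Fq L) :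
    finrank Fq (V.map f) + finrank Fq ((LinearMap.ker f).comap V.subtype) = finrank Fq V := by
  have h := LinearMap.finrank_range_add_finrank_ker (f.domRestrict V)
  rwa [LinearMap.range_domRestrict, LinearMap.ker_domRestrict] at h

lemma finrank_comap_subtype_le [FiniteDimensional Fq L] (f : L →ₗ[Fq] L) (V : Submodule Fq L) :
    finrank Fq ((LinearMap.ker f).comap V.subtype) ≤ finrank Fq (LinearMap.ker f) := by
  refine LinearMap.finrank_le_finrank_of_injective
    (f := LinearMap.restrict V.subtype (p := (LinearMap.ker f).comap V.subtype)
      (q := LinearMap.ker f) (fun x hx => hx)) ?_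
  intro x y h
  rw [Subtype.ext_iff, LinearMap.restrict_apply, LinearMap.restrict_apply] at h
  exact Subtype.ext (Subtype.ext h)

end Aux

/-- Rank of a vector `x ∈ L^n`: the dimension over `Fq` of the `Fq`-span of its components. -/
noncomputable def vecRank (Fq : Type*) [Field Fq] {L : Type*} [Field L] [Algebra Fq L]
    {n : ℕ} (x : Fin n → L) : ℕ :=
  Module.finrank Fq (Submodule.span Fq (Set.range x) : Submodule Fq L)

/-- Gabidulin codes are MRD: the code generated by the Moore matrix of a vector `g` with
`Fq`-linearly independent components has dimension `k` and minimum rank distance `n - k + 1`. -/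
theorem stmt19 (q m n k : ℕ) (Fq L : Type*) [Field Fq] [Fintype Fq] [Field L] [Algebra Fq L]
    (hq : Fintype.card Fq = q) (hm : Module.finrank Fq L = m)
    (hk1 : 1 ≤ k) (hkn : k ≤ n) (hnm : n ≤ m)
    (g : Fin n → L) (hg : LinearIndependent Fq g)
    (G : Matrix (Fin k) (Fin n) L) (hG : ∀ i j, G i j = g j ^ q ^ (i : ℕ))
    (C : Submodule L (Fin n → L)) (hC : C = Submodule.span L (Set.range fun i => G i)) :
    Module.finrank L C = k ∧
    (∀ c ∈ C, c ≠ 0 → n - k + 1 ≤ vecRank Fq c) ∧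
    ∃ c ∈ C, c ≠ 0 ∧ vecRank Fq c = n - k + 1 := by
  classical
  subst hq
  haveI : FiniteDimensional Fq L :=
    Module.finite_of_finrank_pos (by rw [hm]; omega)
  set V : Submodule Fq L := Submodule.span Fq (Set.range g) with hVdef
  have hV : finrank Fq V = n := by
    rw [finrank_span_eq_card hg, Fintype.card_fin]
  have hrow : ∀ (a : Fin k → L) (j : Fin n), (∑ i, a i • G i) j = qpoly Fq a (g j) := by
    intro a j
    rw [qpoly_apply]
    simp [hG, Finset.sum_apply]
  have hindep : LinearIndependent L (fun i => G i) := by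
    rw [Fintype.linearIndependent_iff]
    intro a hsum
    by_contra h
    push_neg at h
    obtain ⟨i0, hi0⟩ := h
    have ha : a ≠ 0 := fun h0 => hi0 (congrFun h0 i0)
    have hle : V ≤ LinearMap.ker (qpoly Fq a) := by
      rw [hVdef, Submodule.span_le]
      rintro _ ⟨j, rfl⟩
      rw [SetLike.mem_coe, LinearMap.mem_ker, ← hrow a j, hsum]
      rfl
    have h1 : n ≤ k - 1 := by
      calc n = finrank Fq V := hV.symm
        _ ≤ finrank Fq (LinearMap.ker (qpoly Fq a)) := Submodule.finrank_mono hle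
        _ ≤ k - 1 := qpoly_ker_finrank_le Fq hk1 ha
    omega
  have hrank : ∀ a : Fin k → L,
      vecRank Fq (∑ i, a i • G i) +
        finrank Fq ((LinearMap.ker (qpoly Fq a)).comap V.subtype) = n := by
    intro a
    have hc : Set.range (∑ i, a i • G i) = (qpoly Fq a) '' (Set.range g) := by
      have he : (∑ i, a i • G i) = fun j => qpoly Fq a (g j) := funext (hrow a)
      rw [he, ← Set.range_comp]
      rfl
    unfold vecRank
    rw [hc, Submodule.span_image, finrank_map_add_comap Fq (qpoly Fq a) V, hV]
  refine ⟨?_, ?_, ?_⟩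
  · rw [hC, finrank_span_eq_card hindep, Fintype.card_fin]
  · intro c hc hc0
    rw [hC, Submodule.mem_span_range_iff_exists_fun] at hc
    obtain ⟨a, rfl⟩ := hc
    have ha : a ≠ 0 := by
      rintro rfl
      simp at hc0
    have h1 := hrank a
    have h2 : finrank Fq ((LinearMap.ker (qpoly Fq a)).comap V.subtype) ≤ k - 1 :=
      le_trans (finrank_comap_subtype_le Fq (qpoly Fq a) V) (qpoly_ker_finrank_le Fq hk1 ha)
    omega
  · -- existence of a codeword of rank exactly n - k + 1
    have hkn' : k - 1 ≤ n := by omega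
    set M : Matrix (Fin k) (Fin (k - 1)) L :=
      fun i j => g (Fin.castLE hkn' j) ^ (Fintype.card Fq) ^ (i : ℕ) with hM
    have hlt : finrank L (Fin (k - 1) → L) < finrank L (Fin k → L) := by
      rw [Module.finrank_fin_fun, Module.finrank_fin_fun]
      omega
    have hker : LinearMap.ker M.vecMulLinear ≠ ⊥ :=
      LinearMap.ker_ne_bot_of_finrank_lt hlt
    obtain ⟨a, haM, ha0⟩ := Submodule.ne_bot_iff _ |>.mp hker
    have hzero : ∀ j : Fin (k - 1), qpoly Fq a (g (Fin.castLE hkn' j)) = 0 := by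
      intro j
      have h := congrFun (LinearMap.mem_ker.mp haM) j
      rw [qpoly_apply]
      rw [Matrix.vecMulLinear_apply] at h
      simpa [Matrix.vecMulLinear_apply, Matrix.vecMul, dotProduct, hM] using h
    refine ⟨∑ i, a i • G i, ?_, ?_, ?_⟩
    · rw [hC]
      exact Submodule.sum_mem _ fun i _ =>
        Submodule.smul_mem _ _ (Submodule.subset_span ⟨i, rfl⟩)
    · intro h
      exact ha0 (funext (Fintype.linearIndependent_iff.mp hindep a h))
    · have h1 := hrank a
      have h2 : finrank Fq ((LinearMap.ker (qpoly Fq a)).comap V.subtype) ≤ k - 1 :=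
        le_trans (finrank_comap_subtype_le Fq (qpoly Fq a) V) (qpoly_ker_finrank_le Fq hk1 ha0)
      have h3 : k - 1 ≤ finrank Fq ((LinearMap.ker (qpoly Fq a)).comap V.subtype) := by
        set K := (LinearMap.ker (qpoly Fq a)).comap V.subtype with hK
        have hmem : ∀ j : Fin (k - 1),
            (⟨g (Fin.castLE hkn' j), Submodule.subset_span ⟨_, rfl⟩⟩ : V) ∈ K := by
          intro j
          rw [hK, Submodule.mem_comap]
          exact LinearMap.mem_ker.mpr (hzero j)
        set w : Fin (k - 1) → K := fun j => ⟨_, hmem j⟩ with hw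
        have hwind : LinearIndependent Fq w := by
          apply LinearIndependent.of_comp (V.subtype.comp K.subtype)
          have : (V.subtype.comp K.subtype) ∘ w = g ∘ (Fin.castLE hkn') := rfl
          rw [this]
          exact hg.comp _ (Fin.castLE_injective hkn')
        have := hwind.fintype_card_le_finrank
        rwa [Fintype.card_fin] at this
      omega
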